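/- arXiv:1308.1044 — 2 statements merged into one kernel-verified Lean document; each statement's English description precedes it below -/
import Mathlib

section
/- Let m be a positive integer and let Y be a Young diagram in Γ_m. Then H_Y < (m + 1)^{(m+1)^2}. -/
/-- The hook length of the cell `(i, j)` of a Young diagram `Y`. -/
def hookLength (Y : YoungDiagram) (i j : ℕ) : ℕ :=
  (Y.rowLen i - j) + (Y.colLen j - i) - 1

/-- `H_Y`: the product of the hook lengths of all the cells of `Y`. -/
def hookProd (Y : YoungDiagram) : ℕ :=
  ∏ c ∈ Y.cells, hookLength Y c.1 c.2

/-- `Γ m`: the set of Young diagrams with exactly `m` nonempty rows in which every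
row length lies between `m` and `m + 2` inclusive. -/
def Gamma (m : ℕ) : Set YoungDiagram :=
  {Y | Y.colLen 0 = m ∧ ∀ i < m, m ≤ Y.rowLen i ∧ Y.rowLen i ≤ m + 2}

lemma key (m s : ℕ) (hs : s ≤ 2 * m) : (2 * m + 1 - s) * (s + 1) ≤ (m + 1) ^ 2 := by
  zify [show s ≤ 2 * m + 1 by omega]
  nlinarith [sq_nonneg ((m : ℤ) - s)]

/-- for a positive integer `m` and `Y ∈ Γ m`,
`H_Y < (m + 1)^((m + 1)^2)`. -/
theorem hookProd_lt_of_mem_Gamma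
    (m : ℕ) (hm : 0 < m) (Y : YoungDiagram) (hY : Y ∈ Gamma m) :
    hookProd Y < (m + 1) ^ ((m + 1) ^ 2) := by
  obtain ⟨hcol, hrow⟩ := hY
  set f : ℕ → ℕ → ℕ := fun i j => 2 * m + 1 - (i + j) with hf
  -- every cell lies in the rectangle
  have hcells : Y.cells ⊆ Finset.range m ×ˢ Finset.range (m + 2) := by
    intro c hc
    rw [Finset.mem_product, Finset.mem_range, Finset.mem_range]
    rw [Y.mem_cells] at hc
    obtain ⟨i, j⟩ := c
    have h1 : i < Y.colLen j := YoungDiagram.mem_iff_lt_colLen.mp hc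
    have h2 : j < Y.rowLen i := YoungDiagram.mem_iff_lt_rowLen.mp hc
    have h3 : Y.colLen j ≤ m := hcol ▸ Y.colLen_anti 0 j (Nat.zero_le _)
    have h4 : i < m := lt_of_lt_of_le h1 h3
    exact ⟨h4, lt_of_lt_of_le h2 (hrow i h4).2⟩
  -- hook length bounded by f
  have hhook : ∀ c ∈ Y.cells, hookLength Y c.1 c.2 ≤ f c.1 c.2 := by
    intro c hc
    rw [Y.mem_cells] at hc
    obtain ⟨i, j⟩ := c
    have h1 : i < Y.colLen j := YoungDiagram.mem_iff_lt_colLen.mp hc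
    have h2 : j < Y.rowLen i := YoungDiagram.mem_iff_lt_rowLen.mp hc
    have h3 : Y.colLen j ≤ m := hcol ▸ Y.colLen_anti 0 j (Nat.zero_le _)
    have h4 : i < m := lt_of_lt_of_le h1 h3
    have h5 : Y.rowLen i ≤ m + 2 := (hrow i h4).2
    simp only [hookLength, hf]
    omega
  have step1 : hookProd Y ≤ ∏ c ∈ Y.cells, f c.1 c.2 :=
    Finset.prod_le_prod' hhook
  have step2 : (∏ c ∈ Y.cells, f c.1 c.2) ≤
      ∏ c ∈ Finset.range m ×ˢ Finset.range (m + 2), f c.1 c.2 := by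
    apply Finset.prod_le_prod_of_subset_of_one_le' hcells
    intro c hc _
    rw [Finset.mem_product, Finset.mem_range, Finset.mem_range] at hc
    simp only [hf]
    omega
  set P : ℕ := ∏ i ∈ Finset.range m, ∏ j ∈ Finset.range (m + 2), f i j with hP
  have hrect : (∏ c ∈ Finset.range m ×ˢ Finset.range (m + 2), f c.1 c.2) = P := by
    rw [hP, Finset.prod_product']
  -- reflected product equals P
  have hrefl : (∏ i ∈ Finset.range m, ∏ j ∈ Finset.range (m + 2),
      f (m - 1 - i) (m + 1 - j)) = P := by
    have h1 : ∀ i, (∏ j ∈ Finset.range (m + 2), f i (m + 1 - j))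
        = ∏ j ∈ Finset.range (m + 2), f i j := by
      intro i
      have := Finset.prod_range_reflect (fun j => f i j) (m + 2)
      simpa using this
    calc (∏ i ∈ Finset.range m, ∏ j ∈ Finset.range (m + 2), f (m - 1 - i) (m + 1 - j))
        = ∏ i ∈ Finset.range m, ∏ j ∈ Finset.range (m + 2), f (m - 1 - i) j :=
          Finset.prod_congr rfl (fun i _ => h1 (m - 1 - i))
      _ = P := by
          rw [hP]
          exact Finset.prod_range_reflect (fun i => ∏ j ∈ Finset.range (m + 2), f i j) m
  -- P^2 bound
  have hE : (∏ i ∈ Finset.range m, ∏ j ∈ Finset.range (m + 2),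
      f i j * f (m - 1 - i) (m + 1 - j))
      = (∏ i ∈ Finset.range m, ∏ j ∈ Finset.range (m + 2), f i j)
        * ∏ i ∈ Finset.range m, ∏ j ∈ Finset.range (m + 2), f (m - 1 - i) (m + 1 - j) := by
    rw [← Finset.prod_mul_distrib]
    exact Finset.prod_congr rfl fun i _ => Finset.prod_mul_distrib
  rw [hrefl, ← hP] at hE
  have hsq : P * P ≤ ((m + 1) ^ (m * (m + 2))) ^ 2 := by
    calc P * P
        = ∏ i ∈ Finset.range m, ∏ j ∈ Finset.range (m + 2),
            f i j * f (m - 1 - i) (m + 1 - j) := hE.symm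
      _ ≤ ∏ i ∈ Finset.range m, ∏ j ∈ Finset.range (m + 2), (m + 1) ^ 2 := by
          apply Finset.prod_le_prod'
          intro i hi
          apply Finset.prod_le_prod'
          intro j hj
          rw [Finset.mem_range] at hi hj
          have hij : f (m - 1 - i) (m + 1 - j) = i + j + 1 := by
            simp only [hf]; omega
          have hfe : f i j = 2 * m + 1 - (i + j) := rfl
          rw [hij, hfe]
          exact key m (i + j) (by omega)
      _ = ((m + 1) ^ 2) ^ (m * (m + 2)) := by
          simp only [Finset.prod_const, Finset.card_range, ← pow_mul]
          ring_nf
      _ = ((m + 1) ^ (m * (m + 2))) ^ 2 := by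
          rw [← pow_mul, ← pow_mul, Nat.mul_comm]
  have hPle : P ≤ (m + 1) ^ (m * (m + 2)) := by
    have := hsq
    rw [← pow_two] at this
    exact (Nat.pow_le_pow_iff_left (n := 2) (by omega)).mp this
  have hfin : (m + 1) ^ (m * (m + 2)) < (m + 1) ^ ((m + 1) ^ 2) := by
    apply Nat.pow_lt_pow_right (by omega)
    nlinarith
  calc hookProd Y ≤ ∏ c ∈ Y.cells, f c.1 c.2 := step1
    _ ≤ ∏ c ∈ Finset.range m ×ˢ Finset.range (m + 2), f c.1 c.2 := step2
    _ = P := hrect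
    _ ≤ (m + 1) ^ (m * (m + 2)) := hPle
    _ < (m + 1) ^ ((m + 1) ^ 2) := hfin
end

section
/- Let n ≥ 64 be an integer and let Y be a Young diagram in Γ_m with exactly n cells (so that m ≥ 8). Then (n!)^{13/14} / (n − 1) ≥ H_Y. -/
/-- Lower bound for `log n!` : `n (log n - 1) ≤ log n!`. -/
lemma log_factorial_lb (n : ℕ) : (n : ℝ) * (Real.log n - 1) ≤ Real.log (n.factorial) := by
  induction n with
  | zero => simp
  | succ n ih =>
    rcases Nat.eq_zero_or_pos n with h | h
    · subst h; simp
    have hn : (0:ℝ) < n := by exact_mod_cast h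
    have hfac : Real.log ((n+1).factorial) = Real.log ((n:ℝ)+1) + Real.log (n.factorial) := by
      rw [Nat.factorial_succ]
      push_cast
      rw [Real.log_mul (by positivity) (by exact_mod_cast n.factorial_pos.ne')]
    have key : (n:ℝ) * (Real.log ((n:ℝ)+1) - Real.log n) ≤ 1 := by
      have h1 : Real.log (((n:ℝ)+1)/n) ≤ ((n:ℝ)+1)/n - 1 :=
        Real.log_le_sub_one_of_pos (by positivity)
      rw [Real.log_div (by positivity) (by positivity)] at h1
      have h2 : ((n:ℝ)+1)/n - 1 = 1/n := by field_simp; ring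
      rw [h2] at h1
      have := mul_le_mul_of_nonneg_left h1 hn.le
      calc (n:ℝ) * (Real.log ((n:ℝ)+1) - Real.log n) ≤ (n:ℝ) * (1/n) := this
        _ = 1 := by field_simp
    push_cast
    rw [hfac]
    nlinarith [ih]

/-- Key numeric inequality. -/
lemma numeric_ineq : Real.log 17 + Real.log 64 / 64 + 13/14 ≤ 13/14 * Real.log 64 := by
  have l64 : Real.log 64 = 6 * Real.log 2 := by
    rw [show (64:ℝ) = 2^6 by norm_num, Real.log_pow]; push_cast; ring
  have l16 : Real.log 16 = 4 * Real.log 2 := by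
    rw [show (16:ℝ) = 2^4 by norm_num, Real.log_pow]; push_cast; ring
  have l17 : Real.log 17 ≤ 4 * Real.log 2 + 1/16 := by
    have h0 : Real.log 17 = Real.log 16 + Real.log (17/16) := by
      rw [← Real.log_mul (by norm_num) (by norm_num)]; norm_num
    have h1 : Real.log (17/16) ≤ 17/16 - 1 := Real.log_le_sub_one_of_pos (by norm_num)
    rw [h0, l16]; linarith
  have hl := Real.log_two_gt_d9
  rw [l64]
  linarith

/-- Main analytic inequality. -/
lemma main_ineq (m n : ℕ) (hm : 8 ≤ m) (hn : 64 ≤ n) (hmn : m*m ≤ n) :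
    ((2*m+1 : ℕ):ℝ)^n * ((n:ℝ) - 1) ≤ (n.factorial : ℝ) ^ ((13:ℝ)/14) := by
  have hM : (8:ℝ) ≤ (m:ℝ) := by exact_mod_cast hm
  have hN : (64:ℝ) ≤ (n:ℝ) := by exact_mod_cast hn
  have hMN : (m:ℝ)*(m:ℝ) ≤ (n:ℝ) := by exact_mod_cast hmn
  have hN1 : (0:ℝ) < (n:ℝ) - 1 := by linarith
  have hNpos : (0:ℝ) < (n:ℝ) := by linarith
  have hB : (0:ℝ) < ((2*m+1 : ℕ):ℝ) := by positivity
  have hBpow : (0:ℝ) < ((2*m+1 : ℕ):ℝ)^n := by positivity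
  have hfacpos : (0:ℝ) < (n.factorial : ℝ) := by exact_mod_cast n.factorial_pos
  have hLHSpos : (0:ℝ) < ((2*m+1 : ℕ):ℝ)^n * ((n:ℝ) - 1) := by positivity
  have hRHSpos : (0:ℝ) < (n.factorial : ℝ) ^ ((13:ℝ)/14) := by positivity
  -- abbreviations
  set M : ℝ := (m:ℝ) with hMdef
  set N : ℝ := (n:ℝ) with hNdef
  have hcast : ((2*m+1 : ℕ):ℝ) = 2*M + 1 := by push_cast; ring
  have hu : (0:ℝ) ≤ Real.log (M/8) := Real.log_nonneg (by rw [le_div_iff₀ (by norm_num)]; linarith)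
  set u : ℝ := Real.log (M/8) with hudef
  -- log (2M+1) ≤ log 17 + u
  have h17 : Real.log (2*M+1) ≤ Real.log 17 + u := by
    have hle : 2*M+1 ≤ 17 * (M/8) := by linarith
    calc Real.log (2*M+1) ≤ Real.log (17 * (M/8)) := Real.log_le_log (by linarith) hle
      _ = Real.log 17 + u := Real.log_mul (by norm_num) (by positivity)
  -- log N ≥ log 64 + 2u
  have hlog8 : (2:ℝ) * Real.log 8 = Real.log 64 := by
    rw [show (8:ℝ) = 2^3 by norm_num, show (64:ℝ) = 2^6 by norm_num, Real.log_pow,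
      Real.log_pow]; push_cast; ring
  have hNlb : Real.log 64 + 2*u ≤ Real.log N := by
    have h1 : Real.log (M*M) ≤ Real.log N := Real.log_le_log (by positivity) hMN
    have h2 : Real.log (M*M) = 2 * Real.log M := by
      rw [Real.log_mul (by positivity) (by positivity)]; ring
    have h3 : Real.log M = Real.log 8 + u := by
      rw [hudef, ← Real.log_mul (by norm_num) (by positivity)]
      congr 1
      ring
    rw [h2, h3] at h1; linarith
  -- log N ≤ N * log 64 / 64
  have hlog64pos : (1:ℝ) ≤ Real.log 64 := by
    have : Real.log 64 = 6 * Real.log 2 := by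
      rw [show (64:ℝ) = 2^6 by norm_num, Real.log_pow]; push_cast; ring
    have := Real.log_two_gt_d9
    linarith
  have hNub : Real.log N ≤ N * Real.log 64 / 64 := by
    have h1 : Real.log N = Real.log 64 + Real.log (N/64) := by
      rw [← Real.log_mul (by norm_num) (by positivity)]
      congr 1
      field_simp
    have h2 : Real.log (N/64) ≤ N/64 - 1 := Real.log_le_sub_one_of_pos (by positivity)
    have h3 : (0:ℝ) ≤ (Real.log 64 - 1) * (N/64 - 1) :=
      mul_nonneg (by linarith) (by linarith)
    linarith
  have hN1log : Real.log (N - 1) ≤ Real.log N := Real.log_le_log hN1 (by linarith)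
  -- main chain on logs
  have hA := log_factorial_lb n
  have hnum := numeric_ineq
  have hchain : (n:ℝ) * Real.log (2*M+1) + Real.log (N-1) ≤ 13/14 * Real.log (n.factorial) := by
    have step1 : (n:ℝ) * Real.log (2*M+1) + Real.log (N-1) ≤
        N * (Real.log 17 + u) + N * Real.log 64 / 64 := by
      have hmul := mul_le_mul_of_nonneg_left h17 hNpos.le
      have h' : Real.log (N-1) ≤ N * Real.log 64 / 64 := hN1log.trans hNub
      linarith
    have step2 : N * (Real.log 17 + u) + N * Real.log 64 / 64 ≤
        13/14 * (N * (Real.log N - 1)) := by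
      have percell : Real.log 17 + u + Real.log 64 / 64 ≤ 13/14 * (Real.log N - 1) := by
        have : 13/14 * (Real.log 64 + 2*u - 1) ≤ 13/14 * (Real.log N - 1) := by
          have : Real.log 64 + 2*u - 1 ≤ Real.log N - 1 := by linarith
          linarith
        linarith
      linarith [mul_le_mul_of_nonneg_left percell hNpos.le]
    have step3 : 13/14 * (N * (Real.log N - 1)) ≤ 13/14 * Real.log (n.factorial) := by
      have : N * (Real.log N - 1) ≤ Real.log (n.factorial) := hA
      linarith
    linarith
  -- convert to the exponential form
  have hlogLHS : Real.log (((2*m+1 : ℕ):ℝ)^n * ((n:ℝ) - 1)) =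
      (n:ℝ) * Real.log (2*M+1) + Real.log (N-1) := by
    rw [Real.log_mul (by positivity) (by linarith), Real.log_pow, hcast]
  have hlogRHS : Real.log ((n.factorial : ℝ) ^ ((13:ℝ)/14)) = 13/14 * Real.log (n.factorial) :=
    Real.log_rpow hfacpos _
  calc ((2*m+1 : ℕ):ℝ)^n * ((n:ℝ) - 1)
      = Real.exp (Real.log (((2*m+1 : ℕ):ℝ)^n * ((n:ℝ) - 1))) := (Real.exp_log hLHSpos).symm
    _ ≤ Real.exp (Real.log ((n.factorial : ℝ) ^ ((13:ℝ)/14))) := by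
        apply Real.exp_le_exp.2
        rw [hlogLHS, hlogRHS]
        exact hchain
    _ = (n.factorial : ℝ) ^ ((13:ℝ)/14) := Real.exp_log hRHSpos

/-- if `n ≥ 64` and `Y ∈ Γ m` has `n` cells (so that `m ≥ 8`), then
`(n!)^(13/14) / (n - 1) ≥ H_Y`. -/
theorem hookProd_le_of_mem_Gamma
    (n m : ℕ) (hn : 64 ≤ n) (Y : YoungDiagram) (hY : Y ∈ Gamma m)
    (hcard : Y.card = n) :
    (hookProd Y : ℝ) ≤ (n.factorial : ℝ) ^ ((13 : ℝ) / 14) / ((n : ℝ) - 1) := by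
  obtain ⟨hcol, hrow⟩ := hY
  -- every cell is in range m ×ˢ range (m+2)
  have hcell : ∀ c ∈ Y.cells, c.1 < m ∧ c.2 < m + 2 := by
    intro c hc
    have hmem : (c.1, c.2) ∈ Y := by rwa [YoungDiagram.mem_cells] at hc
    have h1 : c.1 < m := by
      have h := YoungDiagram.mem_iff_lt_colLen.mp hmem
      calc c.1 < Y.colLen c.2 := h
        _ ≤ Y.colLen 0 := Y.colLen_anti 0 c.2 (Nat.zero_le _)
        _ = m := hcol
    exact ⟨h1, lt_of_lt_of_le (YoungDiagram.mem_iff_lt_rowLen.mp hmem) (hrow c.1 h1).2⟩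
  have hsub : Y.cells ⊆ Finset.range m ×ˢ Finset.range (m+2) := by
    intro c hc
    obtain ⟨h1, h2⟩ := hcell c hc
    simp only [Finset.mem_product, Finset.mem_range]
    exact ⟨h1, h2⟩
  have hub : n ≤ m*(m+2) := by
    rw [← hcard]
    calc Y.cells.card ≤ (Finset.range m ×ˢ Finset.range (m+2)).card :=
          Finset.card_le_card hsub
      _ = m*(m+2) := by simp [Finset.card_product]
  have hm : 8 ≤ m := by nlinarith
  have hsub2 : Finset.range m ×ˢ Finset.range m ⊆ Y.cells := by
    intro c hc
    simp only [Finset.mem_product, Finset.mem_range] at hc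
    rw [YoungDiagram.mem_cells, ← Prod.mk.eta (p := c), YoungDiagram.mem_iff_lt_rowLen]
    exact lt_of_lt_of_le hc.2 (hrow c.1 hc.1).1
  have hlb : m*m ≤ n := by
    rw [← hcard]
    calc m*m = (Finset.range m ×ˢ Finset.range m).card := by simp [Finset.card_product]
      _ ≤ Y.cells.card := Finset.card_le_card hsub2
  -- hook length bound
  have hhook : ∀ c ∈ Y.cells, hookLength Y c.1 c.2 ≤ 2*m+1 := by
    intro c hc
    obtain ⟨h1, _⟩ := hcell c hc
    have hr : Y.rowLen c.1 ≤ m + 2 := (hrow c.1 h1).2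
    have hcl : Y.colLen c.2 ≤ m := hcol ▸ Y.colLen_anti 0 c.2 (Nat.zero_le _)
    unfold hookLength
    omega
  have hprod : hookProd Y ≤ (2*m+1)^n := by
    rw [← hcard]
    exact Finset.prod_le_pow_card _ _ _ hhook
  have hN1 : (0:ℝ) < (n:ℝ) - 1 := by
    have : (64:ℝ) ≤ (n:ℝ) := by exact_mod_cast hn
    linarith
  rw [le_div_iff₀ hN1]
  calc (hookProd Y : ℝ) * ((n:ℝ) - 1) ≤ ((2*m+1 : ℕ):ℝ)^n * ((n:ℝ) - 1) := by
        have h1 : (hookProd Y : ℝ) ≤ ((2*m+1 : ℕ):ℝ)^n := by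
          have := hprod
          exact_mod_cast this
        exact mul_le_mul_of_nonneg_right h1 hN1.le
    _ ≤ (n.factorial : ℝ) ^ ((13:ℝ)/14) := main_ineq m n hm hn hlb
end
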